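/- The two versions of the rounding algorithm are equivalent: the set of facilities opened by the sequential version (which considers clients in increasing order of their clocks R_j, lets i = argmin_{i : x_{ij}>0} Q_i and j' = argmin_{j' : x_{ij'}>0} R_{j'}, opens i and connects j to i if j = j', and otherwise connects j to the same facility as j') equals the set of facilities lying on a 2-cycle of the connection graph H(x), and both versions assign every client to the same facility, namely the last facility on its connection path. -/

import Mathlib

/-!
STATEMENT 3: The two versions of the rounding algorithm are equivalent: the set of facilities
opened by the sequential version (which considers clients in increasing order of their clocks
R_j, lets i = argmin_{i : x_{ij}>0} Q_i and j' = argmin_{j' : x_{ij'}>0} R_{j'}, opens i and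
connects j to i if j = j', and otherwise connects j to the same facility as j') equals the set
of facilities lying on a 2-cycle of the connection graph H(x), and both versions assign every
client to the same facility, namely the last facility on its connection path.
-/

namespace DFL3

noncomputable section

variable {F C : Type*}

/-- Facilities fractionally serving client `j` (neighborhood of `j` in the support graph). -/
def facNbrs [Fintype F] (x : F → C → ℝ) (j : C) : Finset F :=
  Finset.univ.filter fun i => 0 < x i j

/-- Clients fractionally served by facility `i` (neighborhood of `i` in the support graph). -/
def cliNbrs [Fintype C] (x : F → C → ℝ) (i : F) : Finset C :=
  Finset.univ.filter fun j => 0 < x i j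

/-- An element of a nonempty finset minimizing `f`. -/
def argminOn {α : Type*} (f : α → ℝ) (s : Finset α) (h : s.Nonempty) : α :=
  Classical.choose (s.exists_min_image f h)

/-- The connection graph: every vertex points to the neighbor (in the support graph of `x`)
with the smallest clock value (`Q` on facilities, `R` on clients). -/
def nextV [Fintype F] [Fintype C] (x : F → C → ℝ) (Q : F → ℝ) (R : C → ℝ) :
    F ⊕ C → Option (F ⊕ C)
  | Sum.inl i =>
    if h : (cliNbrs x i).Nonempty then some (Sum.inr (argminOn R _ h)) else none
  | Sum.inr j =>
    if h : (facNbrs x j).Nonempty then some (Sum.inl (argminOn Q _ h)) else none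

/-- Follow `next`, accumulating visited vertices and stopping just before revisiting one. -/
def pathAux {α : Type*} [DecidableEq α] (next : α → Option α) :
    ℕ → List α → α → List α
  | 0, vis, v => vis ++ [v]
  | n+1, vis, v =>
    match next v with
    | none => vis ++ [v]
    | some w => if w ∈ vis ++ [v] then vis ++ [v] else pathAux next n (vis ++ [v]) w

/-- The connection path of client `j`: start at `j` and repeatedly follow the unique outgoing
arc of the connection graph, stopping just before revisiting an already visited vertex. -/
def connPath [Fintype F] [Fintype C] [DecidableEq F] [DecidableEq C]
    (x : F → C → ℝ) (Q : F → ℝ) (R : C → ℝ) (j : C) : List (F ⊕ C) :=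
  pathAux (nextV x Q R) (Fintype.card F + Fintype.card C) List.nil (Sum.inr j)

/-- The path `p` traverses the arc `(u, v)`. -/
def traverses {α : Type*} (p : List α) (u v : α) : Prop :=
  ∃ l1 l2 : List α, p = l1 ++ u :: v :: l2

/-- The last facility on a path: the facility to which a client is assigned. -/
def assignedFac (p : List (F ⊕ C)) : Option F :=
  p.reverse.findSome? Sum.getLeft?

/-- Facility `i` lies on a 2-cycle of the connection graph, i.e. it is opened. -/
def opens [Fintype F] [Fintype C] (x : F → C → ℝ) (Q : F → ℝ) (R : C → ℝ) (i : F) : Prop :=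
  ∃ j : C, nextV x Q R (Sum.inl i) = some (Sum.inr j) ∧
    nextV x Q R (Sum.inr j) = some (Sum.inl i)

/-- A preprocessed fractional solution: `x i j ∈ {0, y i}`, `y i ∈ [0,1]`, and every client is
fully fractionally connected. -/
def Preprocessed [Fintype F] (x : F → C → ℝ) (y : F → ℝ) : Prop :=
  (∀ i j, x i j = 0 ∨ x i j = y i) ∧ (∀ i, y i ∈ Set.Icc (0:ℝ) 1) ∧ (∀ j, ∑ i, x i j = 1)

end

noncomputable section
/-- The sequential version of the algorithm (with fuel): when client `j` is considered, let
`i` be the facility with smallest clock among those fractionally serving `j` and `j'` the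
client with smallest clock among those fractionally served by `i`; if `j = j'` then `j` is
connected to `i` (and `i` is opened), otherwise `j` is connected to the same facility as
`j'` (note that `R j' < R j`, so `j'` was considered before `j`). -/
def seqAssign {F C : Type*} [Fintype F] [Fintype C] [DecidableEq C]
    (x : F → C → ℝ) (Q : F → ℝ) (R : C → ℝ) : ℕ → C → Option F
  | 0, _ => none
  | n+1, j =>
    match nextV x Q R (Sum.inr j) with
    | some (Sum.inl i) =>
      match nextV x Q R (Sum.inl i) with
      | some (Sum.inr j') => if j' = j then some i else seqAssign x Q R n j'
      | _ => none
    | _ => none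

/-- The set of facilities opened by the sequential version: those `i` such that for some
client `j`, `i` has the smallest clock among the facilities serving `j` and `j` has the
smallest clock among the clients served by `i`. -/
def seqOpens {F C : Type*} [Fintype F] [Fintype C]
    (x : F → C → ℝ) (Q : F → ℝ) (R : C → ℝ) (i : F) : Prop :=
  ∃ j : C, nextV x Q R (Sum.inr j) = some (Sum.inl i) ∧
    nextV x Q R (Sum.inl i) = some (Sum.inr j)
end

section PathAux

variable {α : Type*} [DecidableEq α] (next : α → Option α)

lemma pathAux_zero (vis : List α) (v : α) : pathAux next 0 vis v = vis ++ [v] := rfl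

lemma pathAux_succ_none {v : α} (h : next v = none) (n : ℕ) (vis : List α) :
    pathAux next (n+1) vis v = vis ++ [v] := by
  unfold pathAux; rw [h]

lemma pathAux_succ_mem {v w : α} (h : next v = some w) (n : ℕ) (vis : List α)
    (hw : w ∈ vis ++ [v]) : pathAux next (n+1) vis v = vis ++ [v] := by
  unfold pathAux; rw [h]; simp [hw]

lemma pathAux_succ_not_mem {v w : α} (h : next v = some w) (n : ℕ) (vis : List α)
    (hw : w ∉ vis ++ [v]) : pathAux next (n+1) vis v = pathAux next n (vis ++ [v]) w := by
  conv_lhs => rw [pathAux]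
  rw [h]; simp [hw]

lemma pathAux_eq_of_mem {v : α} {vis : List α} (h : ∀ w, next v = some w → w ∈ vis ++ [v])
    (n : ℕ) : pathAux next n vis v = vis ++ [v] := by
  cases n with
  | zero => rfl
  | succ n =>
    cases h' : next v with
    | none => exact pathAux_succ_none next h' n vis
    | some w => exact pathAux_succ_mem next h' n vis (h w h')

lemma subset_pathAux (n : ℕ) : ∀ (vis : List α) (v : α), ∀ u ∈ vis ++ [v],
    u ∈ pathAux next n vis v := by
  induction n with
  | zero => intro vis v u hu; simpa [pathAux_zero] using hu
  | succ n ih =>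
    intro vis v u hu
    cases h : next v with
    | none => rw [pathAux_succ_none next h]; exact hu
    | some w =>
      by_cases hw : w ∈ vis ++ [v]
      · rw [pathAux_succ_mem next h _ _ hw]; exact hu
      · rw [pathAux_succ_not_mem next h _ _ hw]
        exact ih _ _ u (by simp at hu ⊢; tauto)

lemma pathAux_prepend (n : ℕ) : ∀ (vis1 vis0 : List α) (v : α),
    (∀ w ∈ pathAux next n vis0 v, w ∉ vis1) →
    pathAux next n (vis1 ++ vis0) v = vis1 ++ pathAux next n vis0 v := by
  induction n with
  | zero => intro vis1 vis0 v _; simp [pathAux_zero]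
  | succ n ih =>
    intro vis1 vis0 v hS
    cases h : next v with
    | none => rw [pathAux_succ_none next h, pathAux_succ_none next h]; simp
    | some w =>
      by_cases hw : w ∈ vis0 ++ [v]
      · rw [pathAux_succ_mem next h _ _ hw,
            pathAux_succ_mem next h _ _ (by simp at hw ⊢; tauto)]
        simp
      · have hw1 : w ∉ vis1 := by
          apply hS
          rw [pathAux_succ_not_mem next h _ _ hw]
          exact subset_pathAux next n _ _ w (by simp)
        rw [pathAux_succ_not_mem next h _ _ hw,
            pathAux_succ_not_mem next h _ _
              (show w ∉ (vis1 ++ vis0) ++ [v] by simp at hw1 hw ⊢; tauto)]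
        rw [show (vis1 ++ vis0) ++ [v] = vis1 ++ (vis0 ++ [v]) by simp]
        exact ih vis1 _ w (fun u hu => hS u (by rwa [pathAux_succ_not_mem next h _ _ hw]))

lemma pathAux_closed (S : α → Prop) (hS : ∀ u, S u → ∀ w, next u = some w → S w) (n : ℕ) :
    ∀ (vis : List α) (v : α), S v → ∀ u ∈ pathAux next n vis v, u ∈ vis ∨ S u := by
  induction n with
  | zero =>
    intro vis v hv u hu
    simp [pathAux_zero] at hu
    rcases hu with h | h
    · exact Or.inl h
    · exact Or.inr (h ▸ hv)
  | succ n ih =>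
    intro vis v hv u hu
    cases h : next v with
    | none =>
      rw [pathAux_succ_none next h] at hu
      simp at hu; rcases hu with h' | h'
      · exact Or.inl h'
      · exact Or.inr (h' ▸ hv)
    | some w =>
      by_cases hw : w ∈ vis ++ [v]
      · rw [pathAux_succ_mem next h _ _ hw] at hu
        simp at hu; rcases hu with h' | h'
        · exact Or.inl h'
        · exact Or.inr (h' ▸ hv)
      · rw [pathAux_succ_not_mem next h _ _ hw] at hu
        rcases ih _ _ (hS v hv w h) u hu with h' | h'
        · simp at h'
          rcases h' with h'' | h''
          · exact Or.inl h''
          · exact Or.inr (h'' ▸ hv)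
        · exact Or.inr h'

variable [Fintype α]

lemma pathAux_fuel_succ (n : ℕ) : ∀ (vis : List α) (v : α), (vis ++ [v]).Nodup →
    Fintype.card α ≤ n + vis.length + 1 →
    pathAux next (n+1) vis v = pathAux next n vis v := by
  induction n with
  | zero =>
    intro vis v hnd hc
    have hall : ∀ u : α, u ∈ vis ++ [v] := by
      have h1 : (vis ++ [v]).toFinset = Finset.univ := by
        apply Finset.eq_univ_of_card
        rw [List.toFinset_card_of_nodup hnd]
        have := List.Nodup.length_le_card hnd
        simp at this ⊢
        omega
      intro u
      rw [← List.mem_toFinset, h1]; exact Finset.mem_univ u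
    cases h : next v with
    | none => rw [pathAux_succ_none next h, pathAux_zero]
    | some w => rw [pathAux_succ_mem next h _ _ (hall w), pathAux_zero]
  | succ n ih =>
    intro vis v hnd hc
    cases h : next v with
    | none => rw [pathAux_succ_none next h, pathAux_succ_none next h]
    | some w =>
      by_cases hw : w ∈ vis ++ [v]
      · rw [pathAux_succ_mem next h _ _ hw, pathAux_succ_mem next h _ _ hw]
      · rw [pathAux_succ_not_mem next h _ _ hw, pathAux_succ_not_mem next h _ _ hw]
        apply ih
        · rw [List.nodup_append]
          refine ⟨hnd, List.nodup_singleton w, ?_⟩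
          intro a ha b hb; simp at hb; subst hb; intro hab; exact hw (hab ▸ ha)
        · simp; omega

lemma pathAux_fuel_eq {n m : ℕ} (vis : List α) (v : α) (hnd : (vis ++ [v]).Nodup)
    (hn : Fintype.card α ≤ n + vis.length + 1) (hm : Fintype.card α ≤ m + vis.length + 1) :
    pathAux next n vis v = pathAux next m vis v := by
  have key : ∀ k a, Fintype.card α ≤ a + vis.length + 1 →
      pathAux next (a + k) vis v = pathAux next a vis v := by
    intro k
    induction k with
    | zero => intro a _; rfl
    | succ k ihk =>
      intro a ha
      rw [show a + (k+1) = (a+k)+1 by ring,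
        pathAux_fuel_succ next _ _ _ hnd (by omega), ihk a ha]
  rcases le_total n m with hnm | hnm
  · obtain ⟨k, rfl⟩ := Nat.exists_eq_add_of_le hnm
    exact (key k n hn).symm
  · obtain ⟨k, rfl⟩ := Nat.exists_eq_add_of_le hnm
    exact key k m hm

end PathAux

section Main

variable {F C : Type*} [Fintype F] [Fintype C] [DecidableEq F] [DecidableEq C]

lemma argminOn_mem {α : Type*} (f : α → ℝ) (s : Finset α) (h : s.Nonempty) :
    argminOn f s h ∈ s :=
  (Classical.choose_spec (s.exists_min_image f h)).1

lemma argminOn_le {α : Type*} (f : α → ℝ) (s : Finset α) (h : s.Nonempty) {a : α}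
    (ha : a ∈ s) : f (argminOn f s h) ≤ f a :=
  (Classical.choose_spec (s.exists_min_image f h)).2 a ha

lemma facNbrs_nonempty {x : F → C → ℝ} {y : F → ℝ} (hxy : Preprocessed x y) (j : C) :
    (facNbrs x j).Nonempty := by
  by_contra h
  rw [Finset.not_nonempty_iff_eq_empty] at h
  have h1 := hxy.2.2 j
  have h2 : ∀ i : F, x i j ≤ 0 := by
    intro i
    by_contra hp
    push_neg at hp
    have : i ∈ facNbrs x j := by simp [facNbrs, hp]
    simp [h] at this
  have h3 : (∑ i : F, x i j) ≤ 0 := Finset.sum_nonpos (fun i _ => h2 i)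
  linarith

lemma nextV_inr (x : F → C → ℝ) (Q : F → ℝ) (R : C → ℝ) (j : C)
    (h : (facNbrs x j).Nonempty) :
    nextV x Q R (Sum.inr j) = some (Sum.inl (argminOn Q _ h)) := by
  simp only [nextV]
  rw [dif_pos h]

lemma nextV_inl (x : F → C → ℝ) (Q : F → ℝ) (R : C → ℝ) (i : F)
    (h : (cliNbrs x i).Nonempty) :
    nextV x Q R (Sum.inl i) = some (Sum.inr (argminOn R _ h)) := by
  simp only [nextV]
  rw [dif_pos h]

lemma assignedFac_pair (j : C) (i : F) :
    assignedFac [Sum.inr j, Sum.inl i] = some i := by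
  simp [assignedFac, List.findSome?]

lemma assignedFac_triple (j : C) (i : F) (j' : C) :
    assignedFac [Sum.inr j, Sum.inl i, Sum.inr j'] = some i := by
  simp [assignedFac, List.findSome?]

lemma assignedFac_append (l1 l2 : List (F ⊕ C)) {i : F} (h : Sum.inl i ∈ l2) :
    assignedFac (l1 ++ l2) = assignedFac l2 := by
  unfold assignedFac
  rw [List.reverse_append, List.findSome?_append]
  cases h2 : List.findSome? Sum.getLeft? l2.reverse with
  | none =>
    exfalso
    rw [List.findSome?_eq_none_iff] at h2
    have := h2 (Sum.inl i) (by simpa using h)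
    simp at this
  | some a => simp

lemma seq_eq_path (x : F → C → ℝ) (y : F → ℝ) (hxy : Preprocessed x y)
    (Q : F → ℝ) (R : C → ℝ) (hdistinct : Function.Injective (Sum.elim Q R)) :
    ∀ (n : ℕ) (j : C), (Finset.univ.filter fun c => R c < R j).card < n →
      seqAssign x Q R n j = assignedFac (connPath x Q R j) := by
  have hQinj : Function.Injective Q := fun a b hab => by
    have : Sum.elim Q R (Sum.inl a) = Sum.elim Q R (Sum.inl b) := by simpa using hab
    simpa using hdistinct this
  have hRinj : Function.Injective R := fun a b hab => by
    have : Sum.elim Q R (Sum.inr a) = Sum.elim Q R (Sum.inr b) := by simpa using hab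
    simpa using hdistinct this
  intro n
  induction n with
  | zero => intro j hj; omega
  | succ n ih =>
    intro j hj
    have hfn : (facNbrs x j).Nonempty := facNbrs_nonempty hxy j
    set i := argminOn Q (facNbrs x j) hfn with hidef
    have hij : 0 < x i j := by
      have : i ∈ facNbrs x j := argminOn_mem Q (facNbrs x j) hfn
      simpa [facNbrs] using this
    have hcn : (cliNbrs x i).Nonempty := ⟨j, by simp [cliNbrs, hij]⟩
    set j' := argminOn R (cliNbrs x i) hcn with hj'def
    have hxij' : 0 < x i j' := by
      have : j' ∈ cliNbrs x i := argminOn_mem R (cliNbrs x i) hcn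
      simpa [cliNbrs] using this
    have h1 : nextV x Q R (Sum.inr j) = some (Sum.inl i) := nextV_inr x Q R j hfn
    have h2 : nextV x Q R (Sum.inl i) = some (Sum.inr j') := nextV_inl x Q R i hcn
    have hseq : seqAssign x Q R (n+1) j =
        if j' = j then some i else seqAssign x Q R n j' := by
      simp only [seqAssign, h1, h2]
    have hFpos : 0 < Fintype.card F := Fintype.card_pos_iff.mpr ⟨i⟩
    have hCpos : 0 < Fintype.card C := Fintype.card_pos_iff.mpr ⟨j⟩
    obtain ⟨N, hN⟩ : ∃ N, Fintype.card F + Fintype.card C = N + 2 :=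
      ⟨Fintype.card F + Fintype.card C - 2, by omega⟩
    have hcardsum : Fintype.card (F ⊕ C) = N + 2 := by rw [Fintype.card_sum]; exact hN
    by_cases hjj : j' = j
    · -- 2-cycle case
      rw [hseq, if_pos hjj]
      have hpath : connPath x Q R j = [Sum.inr j, Sum.inl i] := by
        unfold connPath
        rw [hN, pathAux_succ_not_mem _ h1 _ _ (by simp)]
        simp only [List.nil_append]
        apply pathAux_eq_of_mem
        intro w hw
        rw [h2] at hw
        injection hw with hw
        rw [← hw, hjj]
        simp
      rw [hpath, assignedFac_pair]
    · -- recursion case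
      have hjmem : j ∈ cliNbrs x i := by simp [cliNbrs, hij]
      have hRle : R j' ≤ R j := argminOn_le R (cliNbrs x i) hcn hjmem
      have hRlt : R j' < R j := lt_of_le_of_ne hRle (fun h => hjj (hRinj h))
      have hcard' : (Finset.univ.filter fun c => R c < R j').card < n := by
        have hss : (Finset.univ.filter fun c => R c < R j') ⊂
            (Finset.univ.filter fun c => R c < R j) := by
          refine Finset.ssubset_iff_of_subset ?_ |>.mpr ⟨j', by simp [hRlt], by simp⟩
          intro c hc
          simp at hc ⊢
          linarith
        have := Finset.card_lt_card hss
        omega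
      have hIH := ih j' hcard'
      rw [hseq, if_neg hjj, hIH]
      -- now show the two connection paths give the same assigned facility
      have hfn' : (facNbrs x j').Nonempty := ⟨i, by simp [facNbrs, hxij']⟩
      set i'' := argminOn Q (facNbrs x j') hfn' with hi''def
      have h3 : nextV x Q R (Sum.inr j') = some (Sum.inl i'') := nextV_inr x Q R j' hfn'
      have himem : i ∈ facNbrs x j' := by simp [facNbrs, hxij']
      have hQle : Q i'' ≤ Q i := argminOn_le Q (facNbrs x j') hfn' himem
      have hxi''j' : 0 < x i'' j' := by
        have : i'' ∈ facNbrs x j' := argminOn_mem Q (facNbrs x j') hfn'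
        simpa [facNbrs] using this
      by_cases hii : i'' = i
      · -- path from j' returns immediately to i
        have hpathj : connPath x Q R j = [Sum.inr j, Sum.inl i, Sum.inr j'] := by
          unfold connPath
          rw [hN, pathAux_succ_not_mem _ h1 _ _ (by simp)]
          simp only [List.nil_append]
          rw [pathAux_succ_not_mem _ h2 _ _ (by simp [hjj])]
          apply pathAux_eq_of_mem
          intro w hw
          rw [h3, hii] at hw
          injection hw with hw
          rw [← hw]; simp
        have hpathj' : connPath x Q R j' = [Sum.inr j', Sum.inl i] := by
          unfold connPath
          rw [hN, pathAux_succ_not_mem _ h3 _ _ (by simp), hii]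
          simp only [List.nil_append]
          apply pathAux_eq_of_mem
          intro w hw
          rw [h2] at hw
          injection hw with hw
          rw [← hw]; simp
        rw [hpathj, hpathj', assignedFac_triple, assignedFac_pair]
      · -- path from j' never meets j or i
        have hQlt : Q i'' < Q i := lt_of_le_of_ne hQle (fun h => hii (hQinj h))
        set S : F ⊕ C → Prop := fun w => match w with
          | Sum.inl f => Q f ≤ Q i'' ∧ ∃ c, 0 < x f c ∧ R c ≤ R j'
          | Sum.inr c => R c ≤ R j' ∧ ∃ f, 0 < x f c ∧ Q f ≤ Q i'' with hSdef
        have hSclosed : ∀ u, S u → ∀ w, nextV x Q R u = some w → S w := by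
          intro u hu w hw
          cases u with
          | inl f =>
            obtain ⟨hQf, c, hxfc, hRc⟩ := hu
            have hcn' : (cliNbrs x f).Nonempty := ⟨c, by simp [cliNbrs, hxfc]⟩
            rw [nextV_inl x Q R f hcn'] at hw
            injection hw with hw
            rw [← hw]
            refine ⟨?_, f, ?_, hQf⟩
            · exact le_trans (argminOn_le R _ hcn' (by simp [cliNbrs, hxfc])) hRc
            · have := argminOn_mem R (cliNbrs x f) hcn'
              simpa [cliNbrs] using this
          | inr c =>
            obtain ⟨hRc, f, hxfc, hQf⟩ := hu
            have hfn'' : (facNbrs x c).Nonempty := ⟨f, by simp [facNbrs, hxfc]⟩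
            rw [nextV_inr x Q R c hfn''] at hw
            injection hw with hw
            rw [← hw]
            refine ⟨?_, c, ?_, hRc⟩
            · exact le_trans (argminOn_le Q _ hfn'' (by simp [facNbrs, hxfc])) hQf
            · have := argminOn_mem Q (facNbrs x c) hfn''
              simpa [facNbrs] using this
        have hSj' : S (Sum.inr j') := ⟨le_refl _, i'', hxi''j', le_refl _⟩
        have havoid : ∀ w ∈ pathAux (nextV x Q R) (N + 2) [] (Sum.inr j'),
            w ∉ ([Sum.inr j, Sum.inl i] : List (F ⊕ C)) := by
          intro w hw
          rcases pathAux_closed (nextV x Q R) S hSclosed (N+2) [] (Sum.inr j') hSj' w hw with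
            h' | h'
          · simp at h'
          · intro hmem
            simp at hmem
            rcases hmem with rfl | rfl
            · exact absurd h'.1 (not_le.mpr hRlt)
            · exact absurd h'.1 (not_le.mpr hQlt)
        have hi''mem : Sum.inl i'' ∈ pathAux (nextV x Q R) (N + 2) [] (Sum.inr j') := by
          rw [pathAux_succ_not_mem _ h3 _ _ (by simp)]
          exact subset_pathAux _ _ _ _ _ (by simp)
        have hpathj : connPath x Q R j =
            [Sum.inr j, Sum.inl i] ++ connPath x Q R j' := by
          unfold connPath
          rw [hN, pathAux_succ_not_mem _ h1 _ _ (by simp)]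
          simp only [List.nil_append]
          rw [pathAux_succ_not_mem _ h2 _ _ (by simp [hjj])]
          have hstep : pathAux (nextV x Q R) N
              ([Sum.inr j] ++ [Sum.inl i]) (Sum.inr j') =
              pathAux (nextV x Q R) (N + 2) ([Sum.inr j] ++ [Sum.inl i]) (Sum.inr j') := by
            apply pathAux_fuel_eq
            · simp only [List.nodup_append, List.nodup_singleton, List.nodup_cons,
                List.not_mem_nil, List.nodup_nil, and_true, true_and, List.disjoint_singleton,
                List.mem_singleton, List.mem_append]
              simpa using Ne.symm hjj
            · rw [hcardsum]; simp
            · rw [hcardsum]; simp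
          rw [show ([Sum.inr j, Sum.inl i] : List (F ⊕ C)) =
              [Sum.inr j] ++ [Sum.inl i] by simp] at *
          rw [hstep]
          rw [show ([Sum.inr j] ++ [Sum.inl i] : List (F ⊕ C)) =
              ([Sum.inr j] ++ [Sum.inl i]) ++ ([] : List (F ⊕ C)) by simp]
          rw [pathAux_prepend _ _ _ _ _ havoid]
          simp
        rw [hpathj, assignedFac_append _ _ (by rw [connPath, hN]; exact hi''mem)]

end Main

/-- The two versions of the algorithm are equivalent: the sequential version opens exactly the
facilities on 2-cycles of the connection graph, and assigns every client to the last facility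
on its connection path. -/
theorem two_versions_equivalent
    {F C : Type*} [Fintype F] [Fintype C] [DecidableEq F] [DecidableEq C]
    (x : F → C → ℝ) (y : F → ℝ) (hxy : Preprocessed x y)
    (Q : F → ℝ) (R : C → ℝ)
    (hdistinct : Function.Injective (Sum.elim Q R)) :
    (∀ i : F, seqOpens x Q R i ↔ opens x Q R i) ∧
    (∀ j : C, seqAssign x Q R (Fintype.card C) j = assignedFac (connPath x Q R j)) := by
  constructor
  · intro i
    exact ⟨fun ⟨j, a, b⟩ => ⟨j, b, a⟩, fun ⟨j, a, b⟩ => ⟨j, b, a⟩⟩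
  · intro j
    apply seq_eq_path x y hxy Q R hdistinct
    have hss : (Finset.univ.filter fun c => R c < R j) ⊂ Finset.univ :=
      Finset.ssubset_iff_of_subset (Finset.subset_univ _) |>.mpr
        ⟨j, Finset.mem_univ j, by simp⟩
    have := Finset.card_lt_card hss
    simpa [Finset.card_univ] using this

end DFL3
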